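/- Let D ≥ 3, q ∈ ℝ with |q| > 1, and s* ∈ ℝ with s* q^j ≠ 1 for 2 ≤ j ≤ 2D+1 and s* q ≠ 1. For 1 ≤ r ≤ p ≤ D, the determinant of the tridiagonal (p−r+1)×(p−r+1) matrix with diagonal entries 1, subdiagonal entries e_i^- = −q²(1 − s* q^{2i−3})/((q+1)(1 − s* q^{2i})) (r+1 ≤ i ≤ p) and superdiagonal entries e_i^+ = −(1 − s* q^{2i+3})/(q(q+1)(1 − s* q^{2i})) (r ≤ i ≤ p−1) equals (q^{p−r+2} − 1)(1 − s* q^{p+r}) · ∏_{j=0}^{p−r−1}(1 − s* q^{2r+1+2j}) / ((q+1)^{p−r+1}(q − 1) · ∏_{j=0}^{p−r}(1 − s* q^{2r+2j})), and in particular is nonzero. -/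

import Mathlib

open Matrix Finset

def triMat (a b c : ℕ → ℝ) (n : ℕ) : Matrix (Fin (n+1)) (Fin (n+1)) ℝ :=
  Matrix.of fun i j => if (i:ℕ) = (j:ℕ) then a i else if (i:ℕ) = (j:ℕ)+1 then b i
    else if (j:ℕ) = (i:ℕ)+1 then c i else 0

lemma triMat_det_zero (a b c : ℕ → ℝ) : (triMat a b c 0).det = a 0 := by
  rw [Matrix.det_fin_one]; simp [triMat]

lemma triMat_det_one (a b c : ℕ → ℝ) :
    (triMat a b c 1).det = a 0 * a 1 - c 0 * b 1 := by
  rw [Matrix.det_fin_two]; simp [triMat]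

lemma triMat_det_step (a b c : ℕ → ℝ) (n : ℕ) :
    (triMat a b c (n+2)).det
      = a 0 * (triMat (fun i => a (i+1)) (fun i => b (i+1)) (fun i => c (i+1)) (n+1)).det
        - c 0 * b 1 * (triMat (fun i => a (i+2)) (fun i => b (i+2)) (fun i => c (i+2)) n).det := by
  have hsA : ∀ x : Fin (n+2), (((1 : Fin (n+3)).succAbove x) : ℕ)
      = if (x:ℕ) < 1 then (x:ℕ) else (x:ℕ)+1 := by
    intro x
    rw [Fin.succAbove]
    split_ifs with h1 h2 h2 <;>
      simp_all [Fin.lt_def, Fin.val_one, Fin.coe_castSucc, Fin.val_succ] <;> omega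
  rw [Matrix.det_succ_row_zero]
  rw [Fin.sum_univ_succ, Fin.sum_univ_succ]
  have hz : ∀ j : Fin (n+1), (triMat a b c (n+2)) 0 j.succ.succ = 0 := by
    intro j; simp [triMat, Fin.val_succ]
  have hrest : (∑ j : Fin (n+1), (-1:ℝ) ^ ((j.succ.succ : Fin (n+3)) : ℕ) *
      (triMat a b c (n+2)) 0 j.succ.succ *
      ((triMat a b c (n+2)).submatrix Fin.succ (j.succ.succ).succAbove).det) = 0 := by
    apply Finset.sum_eq_zero; intro j _; rw [hz]; ring
  rw [hrest]
  simp only [Fin.succ_zero_eq_one]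
  have h00 : (triMat a b c (n+2)) 0 0 = a 0 := by simp [triMat]
  have h01 : (triMat a b c (n+2)) 0 1 = c 0 := by simp [triMat]
  have hm1 : ((triMat a b c (n+2)).submatrix Fin.succ ((0 : Fin (n+3)).succAbove)).det
      = (triMat (fun i => a (i+1)) (fun i => b (i+1)) (fun i => c (i+1)) (n+1)).det := by
    congr 1
    rw [Fin.succAbove_zero]
    ext i j
    simp only [triMat, Matrix.submatrix_apply, Matrix.of_apply, Fin.val_succ]
    split_ifs <;> first | rfl | omega
  set K := (triMat a b c (n+2)).submatrix Fin.succ ((1 : Fin (n+3)).succAbove) with hK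
  have hm2 : K.det = b 1 *
      (triMat (fun i => a (i+2)) (fun i => b (i+2)) (fun i => c (i+2)) n).det := by
    rw [Matrix.det_succ_column_zero, Fin.sum_univ_succ]
    have hcol : (((1 : Fin (n+3)).succAbove 0) : ℕ) = 0 := by rw [hsA]; simp
    have hK0 : ∀ i : Fin (n+2), K i 0 = if (i:ℕ) = 0 then b 1 else 0 := by
      intro i
      simp only [hK, Matrix.submatrix_apply, triMat, Matrix.of_apply, Fin.val_succ, hcol]
      by_cases h : (i:ℕ) = 0
      · simp [h]
      · rw [if_neg h, if_neg (by omega), if_neg (by omega), if_neg (by omega)]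
    have hrest2 : (∑ i : Fin (n+1), (-1:ℝ) ^ ((i.succ : Fin (n+2)) : ℕ) * K i.succ 0 *
        (K.submatrix (i.succ).succAbove Fin.succ).det) = 0 := by
      apply Finset.sum_eq_zero; intro i _
      rw [hK0]
      simp [Fin.val_succ]
    rw [hrest2, hK0]
    have hmm : (K.submatrix ((0 : Fin (n+2)).succAbove) Fin.succ).det
        = (triMat (fun i => a (i+2)) (fun i => b (i+2)) (fun i => c (i+2)) n).det := by
      congr 1
      rw [Fin.succAbove_zero]
      ext i j
      simp only [hK, Matrix.submatrix_apply, triMat, Matrix.of_apply, Fin.val_succ]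
      rw [hsA]
      simp only [Fin.val_succ]
      rw [if_neg (show ¬((j:ℕ)+1 < 1) by omega)]
      split_ifs <;> first | rfl | omega
    rw [hmm]
    norm_num
  rw [h00, h01, hm1, hm2]
  simp only [Fin.val_zero, Fin.val_one, pow_zero, pow_one]
  ring


noncomputable def Fv (q s : ℝ) (r n : ℕ) : ℝ :=
  (q ^ (n + 2) - 1) * (1 - s * q ^ (2 * r + n)) *
      (∏ j ∈ Finset.range n, (1 - s * q ^ (2 * r + 1 + 2 * j))) /
    ((q + 1) ^ (n + 1) * (q - 1) * ∏ j ∈ Finset.range (n + 1), (1 - s * q ^ (2 * r + 2 * j)))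


lemma key (q s : ℝ) (hq0 : q ≠ 0) (hqp : q + 1 ≠ 0) (hqm : q - 1 ≠ 0) (D : ℕ)
    (H : ∀ k : ℕ, 1 ≤ k → k ≤ 2 * D → 1 - s * q ^ k ≠ 0)
    (em ep : ℕ → ℝ)
    (hem : ∀ i, em i = -(q ^ 2 * (1 - s * q ^ (2 * i - 3))) / ((q + 1) * (1 - s * q ^ (2 * i))))
    (hep : ∀ i, ep i = -(1 - s * q ^ (2 * i + 3)) / (q * (q + 1) * (1 - s * q ^ (2 * i))))
    (n : ℕ) :
    ∀ r : ℕ, 1 ≤ r → r + n ≤ D →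
      (triMat (fun _ => 1) (fun i => em (r + i)) (fun i => ep (r + i)) n).det = Fv q s r n := by
  induction n using Nat.strong_induction_on with
  | _ n ih =>
    match n with
    | 0 =>
      intro r hr hD
      rw [triMat_det_zero]
      have d1 : 1 - s * q ^ (2 * r + 2 * 0) ≠ 0 := H _ (by omega) (by omega)
      simp only [Fv, zero_add, Finset.prod_range_one, Finset.prod_range_zero, mul_one, pow_one,
        Nat.add_zero]
      rw [eq_div_iff (by exact mul_ne_zero (mul_ne_zero hqp hqm) d1)]
      ring
    | 1 =>
      intro r hr hD
      rw [triMat_det_one]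
      obtain ⟨r', rfl⟩ : ∃ r'', r = r'' + 1 := ⟨r - 1, by omega⟩
      rw [hem, hep]
      simp only [Nat.add_zero, show 2 * (r' + 1 + 1) - 3 = 2 * r' + 1 from by omega]
      have d1 : 1 - s * q ^ (2 * (r' + 1)) ≠ 0 := H _ (by omega) (by omega)
      have d2 : 1 - s * q ^ (2 * (r' + 1 + 1)) ≠ 0 := H _ (by omega) (by omega)
      have d3 : 1 - s * q ^ (2 * (r' + 1) + 2 * 0) ≠ 0 := H _ (by omega) (by omega)
      have d4 : 1 - s * q ^ (2 * (r' + 1) + 2) ≠ 0 := H _ (by omega) (by omega)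
      simp only [Fv, Finset.prod_range_one, Finset.prod_range_succ, Finset.prod_range_zero,
        one_mul, mul_one]
      field_simp
      ring
    | (m+2) =>
      intro r hr hD
      rw [triMat_det_step]
      have h1 : (triMat (fun i => (1:ℝ)) (fun i => em (r + (i + 1))) (fun i => ep (r + (i + 1)))
          (m + 1)) = triMat (fun _ => 1) (fun i => em ((r + 1) + i)) (fun i => ep ((r + 1) + i))
          (m + 1) := by
        ext i j
        simp only [triMat, Matrix.of_apply]
        rw [show r + ((i:ℕ) + 1) = r + 1 + (i:ℕ) from by omega]
      have h2 : (triMat (fun i => (1:ℝ)) (fun i => em (r + (i + 2))) (fun i => ep (r + (i + 2)))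
          m) = triMat (fun _ => 1) (fun i => em ((r + 2) + i)) (fun i => ep ((r + 2) + i)) m := by
        ext i j
        simp only [triMat, Matrix.of_apply]
        rw [show r + ((i:ℕ) + 2) = r + 2 + (i:ℕ) from by omega]
      simp only [h1, h2]
      rw [ih (m + 1) (by omega) (r + 1) (by omega) (by omega),
        ih m (by omega) (r + 2) (by omega) (by omega)]
      obtain ⟨r', rfl⟩ : ∃ r'', r = r'' + 1 := ⟨r - 1, by omega⟩
      set r := r' + 1 with hrdef
      rw [hem, hep]
      simp only [Nat.add_zero, show 2 * (r + 1) - 3 = 2 * r' + 1 from by omega]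
      set A := ∏ j ∈ Finset.range m, (1 - s * q ^ (2 * (r + 2) + 1 + 2 * j)) with hA
      set B := ∏ j ∈ Finset.range (m + 1), (1 - s * q ^ (2 * (r + 2) + 2 * j)) with hB
      have ha1 : ∏ j ∈ Finset.range m, (1 - s * q ^ (2 * r + 1 + 2 * (j + 1 + 1))) = A :=
        Finset.prod_congr rfl fun j _ => by
          rw [show 2 * r + 1 + 2 * (j + 1 + 1) = 2 * (r + 2) + 1 + 2 * j from by ring]
      have ha2 : ∏ j ∈ Finset.range m, (1 - s * q ^ (2 * (r + 1) + 1 + 2 * (j + 1))) = A :=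
        Finset.prod_congr rfl fun j _ => by
          rw [show 2 * (r + 1) + 1 + 2 * (j + 1) = 2 * (r + 2) + 1 + 2 * j from by ring]
      have hb1 : ∏ j ∈ Finset.range (m + 1), (1 - s * q ^ (2 * r + 2 * (j + 1 + 1))) = B :=
        Finset.prod_congr rfl fun j _ => by
          rw [show 2 * r + 2 * (j + 1 + 1) = 2 * (r + 2) + 2 * j from by ring]
      have hb2 : ∏ j ∈ Finset.range (m + 1), (1 - s * q ^ (2 * (r + 1) + 2 * (j + 1))) = B :=
        Finset.prod_congr rfl fun j _ => by
          rw [show 2 * (r + 1) + 2 * (j + 1) = 2 * (r + 2) + 2 * j from by ring]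
      have hP1a : ∏ j ∈ Finset.range (m + 2), (1 - s * q ^ (2 * r + 1 + 2 * j))
          = (1 - s * q ^ (2 * r + 1)) * (1 - s * q ^ (2 * r + 3)) * A := by
        rw [Finset.prod_range_succ', Finset.prod_range_succ', ha1]
        rw [show 2 * r + 1 + 2 * (0 + 1) = 2 * r + 3 from by ring,
          show 2 * r + 1 + 2 * 0 = 2 * r + 1 from by ring]
        ring
      have hP1b : ∏ j ∈ Finset.range (m + 1), (1 - s * q ^ (2 * (r + 1) + 1 + 2 * j))
          = (1 - s * q ^ (2 * r + 3)) * A := by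
        rw [Finset.prod_range_succ', ha2]
        rw [show 2 * (r + 1) + 1 + 2 * 0 = 2 * r + 3 from by ring]
        ring
      have hP0a : ∏ j ∈ Finset.range (m + 2 + 1), (1 - s * q ^ (2 * r + 2 * j))
          = (1 - s * q ^ (2 * r)) * (1 - s * q ^ (2 * r + 2)) * B := by
        rw [Finset.prod_range_succ', Finset.prod_range_succ', hb1]
        rw [show 2 * r + 2 * (0 + 1) = 2 * r + 2 from by ring,
          show 2 * r + 2 * 0 = 2 * r from by ring]
        ring
      have hP0b : ∏ j ∈ Finset.range (m + 1 + 1), (1 - s * q ^ (2 * (r + 1) + 2 * j))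
          = (1 - s * q ^ (2 * r + 2)) * B := by
        rw [Finset.prod_range_succ', hb2]
        rw [show 2 * (r + 1) + 2 * 0 = 2 * r + 2 from by ring]
        ring
      have dA : A ≠ 0 := by
        rw [hA]
        exact Finset.prod_ne_zero_iff.2 fun j hj => H _ (by omega) (by
          simp only [Finset.mem_range] at hj; omega)
      have dB : B ≠ 0 := by
        rw [hB]
        exact Finset.prod_ne_zero_iff.2 fun j hj => H _ (by omega) (by
          simp only [Finset.mem_range] at hj; omega)
      have d1 : 1 - s * q ^ (2 * r) ≠ 0 := H _ (by omega) (by omega)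
      have d2 : 1 - s * q ^ (2 * r + 2) ≠ 0 := H _ (by omega) (by omega)
      have d3 : 1 - s * q ^ (2 * (r + 1)) ≠ 0 := H _ (by omega) (by omega)
      simp only [Fv, hP1a, hP1b, hP0a, hP0b]
      rw [← hA, ← hB]
      field_simp
      ring

theorem stmt_19 (D : ℕ) (hD : 3 ≤ D) (q s : ℝ) (hq : 1 < |q|)
    (hs : ∀ j : ℕ, 2 ≤ j → j ≤ 2 * D + 1 → s * q ^ j ≠ 1)
    (hsq : s * q ≠ 1)
    (em ep : ℕ → ℝ)
    (hem : ∀ i, em i = -(q ^ 2 * (1 - s * q ^ (2 * i - 3))) / ((q + 1) * (1 - s * q ^ (2 * i))))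
    (hep : ∀ i, ep i = -(1 - s * q ^ (2 * i + 3)) / (q * (q + 1) * (1 - s * q ^ (2 * i))))
    (r p : ℕ) (hr : 1 ≤ r) (hrp : r ≤ p) (hp : p ≤ D)
    (M : Matrix (Fin (p - r + 1)) (Fin (p - r + 1)) ℝ)
    (hM : ∀ i j : Fin (p - r + 1),
      M i j = if (i : ℕ) = j then 1
        else if (i : ℕ) = (j : ℕ) + 1 then em (r + i)
        else if (j : ℕ) = (i : ℕ) + 1 then ep (r + i)
        else 0) :
    M.det = (q ^ (p - r + 2) - 1) * (1 - s * q ^ (p + r)) *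
        (∏ j ∈ Finset.range (p - r), (1 - s * q ^ (2 * r + 1 + 2 * j))) /
      ((q + 1) ^ (p - r + 1) * (q - 1) *
        ∏ j ∈ Finset.range (p - r + 1), (1 - s * q ^ (2 * r + 2 * j))) ∧
    M.det ≠ 0 := by
  have hq0 : q ≠ 0 := by
    intro h; rw [h] at hq; norm_num at hq
  have hqp : q + 1 ≠ 0 := by
    intro h
    have : q = -1 := by linarith
    rw [this] at hq; norm_num at hq
  have hqm : q - 1 ≠ 0 := by
    intro h
    have : q = 1 := by linarith
    rw [this] at hq; norm_num at hq
  have H : ∀ k : ℕ, 1 ≤ k → k ≤ 2 * D → 1 - s * q ^ k ≠ 0 := by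
    intro k h1 h2
    rcases eq_or_lt_of_le h1 with h | h
    · rw [← h, pow_one]
      exact sub_ne_zero.mpr (Ne.symm hsq)
    · exact sub_ne_zero.mpr (Ne.symm (hs k (by omega) (by omega)))
  have hMt : M = triMat (fun _ => 1) (fun i => em (r + i)) (fun i => ep (r + i)) (p - r) := by
    ext i j
    rw [hM]
    simp only [triMat, Matrix.of_apply]
  have hdet : M.det = Fv q s r (p - r) := by
    rw [hMt]
    exact key q s hq0 hqp hqm D H em ep hem hep (p - r) r hr (by omega)
  have hF : Fv q s r (p - r) = (q ^ (p - r + 2) - 1) * (1 - s * q ^ (p + r)) *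
        (∏ j ∈ Finset.range (p - r), (1 - s * q ^ (2 * r + 1 + 2 * j))) /
      ((q + 1) ^ (p - r + 1) * (q - 1) *
        ∏ j ∈ Finset.range (p - r + 1), (1 - s * q ^ (2 * r + 2 * j))) := by
    simp only [Fv]
    rw [show 2 * r + (p - r) = p + r from by omega]
  have n1 : q ^ (p - r + 2) - 1 ≠ 0 := by
    refine sub_ne_zero.mpr fun h => ?_
    have h2 := one_lt_pow₀ hq (show p - r + 2 ≠ 0 by omega)
    rw [← abs_pow, h] at h2
    norm_num at h2
  have n2 : 1 - s * q ^ (p + r) ≠ 0 := H _ (by omega) (by omega)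
  have n3 : (∏ j ∈ Finset.range (p - r), (1 - s * q ^ (2 * r + 1 + 2 * j))) ≠ 0 :=
    Finset.prod_ne_zero_iff.2 fun j hj => H _ (by omega)
      (by simp only [Finset.mem_range] at hj; omega)
  have n4 : (∏ j ∈ Finset.range (p - r + 1), (1 - s * q ^ (2 * r + 2 * j))) ≠ 0 :=
    Finset.prod_ne_zero_iff.2 fun j hj => H _ (by omega)
      (by simp only [Finset.mem_range] at hj; omega)
  have hne : Fv q s r (p - r) ≠ 0 := by
    rw [hF]
    exact div_ne_zero (mul_ne_zero (mul_ne_zero n1 n2) n3)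
      (mul_ne_zero (mul_ne_zero (pow_ne_zero _ hqp) hqm) n4)
  exact ⟨hdet.trans hF, by rw [hdet]; exact hne⟩
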